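/- arXiv:1812.00781 — 8 statements merged into one kernel-verified Lean document; each statement's English description precedes it below -/
import Mathlib

section
/- For a positive real number k and all m ≥ n ≥ 0, the k-Fibonacci sequence satisfies d'Ocagne's identity: F_{k,m} · F_{k,n+1} − F_{k,m+1} · F_{k,n} = (−1)^n · F_{k,m−n}. -/
noncomputable def kFib (k : ℝ) : ℕ → ℝ
  | 0 => 0
  | 1 => 1
  | (n + 2) => k * kFib k (n + 1) + kFib k n

noncomputable def kLucas (k : ℝ) : ℕ → ℝ
  | 0 => 2
  | 1 => k
  | (n + 2) => k * kLucas k (n + 1) + kLucas k n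

noncomputable def HF (k : ℝ) (n : ℕ) : Fin 4 → ℝ :=
  ![kFib k n, kFib k (n + 1), kFib k (n + 2), kFib k (n + 3)]

noncomputable def HL (k : ℝ) (n : ℕ) : Fin 4 → ℝ :=
  ![kLucas k n, kLucas k (n + 1), kLucas k (n + 2), kLucas k (n + 3)]

def hconj (a : Fin 4 → ℝ) : Fin 4 → ℝ := ![a 0, -a 1, -a 2, -a 3]

def hmul (a b : Fin 4 → ℝ) : Fin 4 → ℝ :=
  ![a 0 * b 0 + a 1 * b 1 + a 2 * b 2 + a 3 * b 3,
    a 0 * b 1 + a 1 * b 0 + a 2 * b 3 - a 3 * b 2,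
    a 0 * b 2 + a 2 * b 0 - a 1 * b 3 + a 3 * b 1,
    a 0 * b 3 + a 3 * b 0 + a 1 * b 2 - a 2 * b 1]

lemma kFib_rec (k : ℝ) (n : ℕ) : kFib k (n + 2) = k * kFib k (n + 1) + kFib k n := rfl

lemma dOcagne_aux (k : ℝ) (d : ℕ) : ∀ n : ℕ,
    kFib k (n + d) * kFib k (n + 1) - kFib k (n + d + 1) * kFib k n = (-1) ^ n * kFib k d := by
  intro n
  induction n with
  | zero => simp [kFib]
  | succ n ih =>
    have h1 : n + 1 + d + 1 = (n + d) + 2 := by omega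
    have h2 : n + 1 + d = (n + d) + 1 := by omega
    rw [h1, h2, kFib_rec, kFib_rec]
    have : kFib k (n + d + 1) * (k * kFib k (n + 1) + kFib k n) -
        (k * kFib k (n + d + 1) + kFib k (n + d)) * kFib k (n + 1) =
        -(kFib k (n + d) * kFib k (n + 1) - kFib k (n + d + 1) * kFib k n) := by ring
    rw [this, ih]
    ring

theorem dOcagne (k : ℝ) (hk : 0 < k) (n m : ℕ) (h : n ≤ m) :
    kFib k m * kFib k (n + 1) - kFib k (m + 1) * kFib k n = (-1) ^ n * kFib k (m - n) := by
  obtain ⟨d, rfl⟩ := Nat.exists_eq_add_of_le h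
  have := dOcagne_aux k d n
  simpa [Nat.add_sub_cancel_left, add_comm] using this
end

section
/- For a positive real number k and all n ≥ 0, the k-Fibonacci sequence satisfies F_{k,n}² + F_{k,n+1}² = F_{k,2n+1}. -/
lemma kFib_add (k : ℝ) (m : ℕ) : ∀ n, kFib k (m + n + 1) =
    kFib k (m + 1) * kFib k (n + 1) + kFib k m * kFib k n := by
  intro n
  induction n using Nat.twoStepInduction generalizing m with
  | zero => simp [kFib]
  | one => show kFib k (m + 2) = _; simp [kFib]; ring
  | more n ih1 ih2 =>
    have h1 := ih1 m
    have h2 := ih2 m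
    have : m + (n + 2) + 1 = (m + n + 1) + 2 := by ring
    rw [this]
    show k * kFib k (m + n + 1 + 1) + kFib k (m + n + 1) = _
    have : m + n + 1 + 1 = m + (n+1) + 1 := by ring
    rw [this, h1, h2]
    have e2 : kFib k (n + 2) = k * kFib k (n + 1) + kFib k n := rfl
    have e3 : kFib k (n + 2 + 1) = k * kFib k (n + 2) + kFib k (n + 1) := rfl
    rw [e3, e2]
    ring

theorem sum_of_squares (k : ℝ) (hk : 0 < k) (n : ℕ) :
    kFib k n ^ 2 + kFib k (n + 1) ^ 2 = kFib k (2 * n + 1) := by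
  have := kFib_add k n n
  rw [show 2 * n + 1 = n + n + 1 by ring, this]
  ring
end

section
/- For a positive real number k and all n ≥ 1, the sum of the even-indexed k-Fibonacci numbers satisfies ∑_{i=1}^{n} F_{k,2i} = (F_{k,2n+1} − 1)/k. -/
theorem sum_even_kFib (k : ℝ) (hk : 0 < k) (n : ℕ) (hn : 1 ≤ n) :
    ∑ i ∈ Finset.Icc 1 n, kFib k (2 * i) = (kFib k (2 * n + 1) - 1) / k := by
  rw [eq_div_iff hk.ne']
  induction n with
  | zero => omega
  | succ m ih =>
    rcases Nat.eq_or_lt_of_le hn with h | h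
    · have hm : m = 0 := by omega
      subst hm
      norm_num [show (3:ℕ) = 1 + 2 from rfl, kFib]
    · rw [Finset.sum_Icc_succ_top (by omega), add_mul, ih (by omega)]
      have : 2 * (m + 1) + 1 = (2 * m + 1) + 2 := by ring
      rw [this, kFib]
      have : 2 * (m + 1) = 2 * m + 2 := by ring
      rw [this]
      ring
end

section
/- For a positive real number k and all n ≥ 2, the hyperbolic k-Fibonacci and k-Lucas quaternions satisfy HF_{k,n+2} − HF_{k,n−2} = k·HL_{k,n}. -/
lemma key (k : ℝ) : ∀ m, kFib k (m + 4) - kFib k m = k * kLucas k (m + 2) := by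
  intro m
  induction m using Nat.twoStepInduction with
  | zero => simp [kFib, kLucas]; ring
  | one => simp [kFib, kLucas]; ring
  | more m ih1 ih2 =>
    have h1 : kFib k (m + 2 + 4) = k * kFib k (m + 1 + 4) + kFib k (m + 4) := rfl
    have h2 : kFib k (m + 2) = k * kFib k (m + 1) + kFib k m := rfl
    have h3 : kLucas k (m + 2 + 2) = k * kLucas k (m + 1 + 2) + kLucas k (m + 2) := rfl
    rw [h1, h2, h3]
    linear_combination k * ih2 + ih1

theorem HF_HL_diff (k : ℝ) (hk : 0 < k) (n : ℕ) (hn : 2 ≤ n) :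
    HF k (n + 2) - HF k (n - 2) = k • HL k n := by
  obtain ⟨m, rfl⟩ : ∃ m, n = m + 2 := ⟨n - 2, (Nat.sub_add_cancel hn).symm⟩
  funext i
  fin_cases i <;>
    simp [HF, HL, Nat.add_sub_cancel] <;>
    · have := key k
      rw [sub_eq_iff_eq_add]
      linarith [key k m, key k (m+1), key k (m+2), key k (m+3)]
end

section
/- For a positive real number k and n ≥ 1, the sum of hyperbolic k-Fibonacci quaternions satisfies ∑_{s=1}^{n} HF_{k,s} = (1/k)·(HF_{k,n+1} + HF_{k,n} − HF_{k,1} − HF_{k,0}). -/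
lemma HF_rec (k : ℝ) (n : ℕ) : HF k (n + 2) = k • HF k (n + 1) + HF k n := by
  funext i
  fin_cases i <;>
    simp [HF, show n+2+1 = n+1+2 from rfl, show n+2+2 = n+2+2 from rfl,
      show n+2+3 = n+3+2 from rfl, show n+1+1 = n+2 from rfl,
      show n+1+2 = n+3 from rfl, show n+1+3 = n+2+2 from rfl, kFib]

theorem sum_HF (k : ℝ) (hk : 0 < k) (n : ℕ) (hn : 1 ≤ n) :
    ∑ s ∈ Finset.Icc 1 n, HF k s = (1 / k) • (HF k (n + 1) + HF k n - HF k 1 - HF k 0) := by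
  have hk' : k ≠ 0 := hk.ne'
  induction n with
  | zero => omega
  | succ m ih =>
    rcases Nat.eq_or_lt_of_le hn with h | h
    · simp only [← h]
      norm_num
      rw [HF_rec]
      funext i
      simp [smul_add, mul_comm]
      field_simp
    · have hm : 1 ≤ m := by omega
      rw [Finset.sum_Icc_succ_top hn, ih hm, HF_rec]
      funext i
      simp [smul_add, smul_sub]
      field_simp
      ring
end

section
/- For a positive real number k and n ≥ 1, ∑_{s=1}^{n} HF_{k,2s−1} = (1/k)·(HF_{k,2n} − HF_{k,0}) and ∑_{s=1}^{n} HF_{k,2s} = (1/k)·(HF_{k,2n+1} − HF_{k,1}). -/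
theorem sum_HF_odd_even (k : ℝ) (hk : 0 < k) (n : ℕ) (hn : 1 ≤ n) :
    (∑ s ∈ Finset.Icc 1 n, HF k (2 * s - 1) = (1 / k) • (HF k (2 * n) - HF k 0)) ∧
    (∑ s ∈ Finset.Icc 1 n, HF k (2 * s) = (1 / k) • (HF k (2 * n + 1) - HF k 1)) := by
  clear hn
  have hk0 : k ≠ 0 := ne_of_gt hk
  induction n with
  | zero => simp
  | succ n ih =>
    obtain ⟨ih1, ih2⟩ := ih
    have hins : Finset.Icc 1 (n + 1) = insert (n + 1) (Finset.Icc 1 n) := by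
      ext x; simp [Finset.mem_Icc]; omega
    constructor
    · rw [hins, Finset.sum_insert (by simp), ih1,
        show 2 * (n + 1) - 1 = 2 * n + 1 from by omega,
        show 2 * (n + 1) = (2 * n) + 2 from by ring, HF_rec]
      match_scalars <;> field_simp <;> ring
    · have h3 : HF k (2 * (n + 1) + 1) = k • HF k (2 * (n + 1)) + HF k (2 * n + 1) := by
        simpa [show 2 * n + 1 + 2 = 2 * (n + 1) + 1 by ring,
          show 2 * n + 1 + 1 = 2 * (n + 1) by ring] using HF_rec k (2 * n + 1)
      rw [hins, Finset.sum_insert (by simp), ih2, h3]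
      match_scalars <;> field_simp <;> ring
end

section
/- Binet's formula for hyperbolic k-Fibonacci quaternions: for every n ≥ 0, HF_{k,n} = (α̂·α^n − β̂·β^n)/√(k²+4), where α = (k+√(k²+4))/2, β = (k−√(k²+4))/2, α̂ = (1, α, α², α³), and β̂ = (1, β, β², β³) (componentwise, since α^m and β^m multiply each component). -/
lemma kFib_binet (k : ℝ) (hk : 0 < k) (n : ℕ) :
    Real.sqrt (k ^ 2 + 4) * kFib k n =
      ((k + Real.sqrt (k ^ 2 + 4)) / 2) ^ n - ((k - Real.sqrt (k ^ 2 + 4)) / 2) ^ n := by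
  have hs : Real.sqrt (k ^ 2 + 4) ^ 2 = k ^ 2 + 4 := Real.sq_sqrt (by positivity)
  set s := Real.sqrt (k ^ 2 + 4) with hsdef
  have hα : ((k + s) / 2) ^ 2 = k * ((k + s) / 2) + 1 := by
    field_simp; nlinarith [hs]
  have hβ : ((k - s) / 2) ^ 2 = k * ((k - s) / 2) + 1 := by
    field_simp; nlinarith [hs]
  induction n using Nat.twoStepInduction with
  | zero => simp [kFib]
  | one => simp [kFib]; ring
  | more n ih1 ih2 =>
    rw [kFib]
    linear_combination k * ih2 + ih1 + ((k + s)/2)^n * hα - ((k - s)/2)^n * hβ + ((((k - s)/2)^n - ((k + s)/2)^n)/2) * hs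

theorem HF_binet (k : ℝ) (hk : 0 < k) (n : ℕ) :
    HF k n = (1 / Real.sqrt (k ^ 2 + 4)) •
      (((k + Real.sqrt (k ^ 2 + 4)) / 2) ^ n •
          ![(1 : ℝ), (k + Real.sqrt (k ^ 2 + 4)) / 2, ((k + Real.sqrt (k ^ 2 + 4)) / 2) ^ 2,
            ((k + Real.sqrt (k ^ 2 + 4)) / 2) ^ 3] -
        ((k - Real.sqrt (k ^ 2 + 4)) / 2) ^ n •
          ![(1 : ℝ), (k - Real.sqrt (k ^ 2 + 4)) / 2, ((k - Real.sqrt (k ^ 2 + 4)) / 2) ^ 2,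
            ((k - Real.sqrt (k ^ 2 + 4)) / 2) ^ 3]) := by
  have hspos : (0 : ℝ) < Real.sqrt (k ^ 2 + 4) := Real.sqrt_pos.mpr (by positivity)
  have hdiv : ∀ m : ℕ, kFib k m =
      (((k + Real.sqrt (k ^ 2 + 4)) / 2) ^ m - ((k - Real.sqrt (k ^ 2 + 4)) / 2) ^ m) /
        Real.sqrt (k ^ 2 + 4) := by
    intro m
    rw [eq_div_iff hspos.ne']
    linear_combination kFib_binet k hk m
  funext i
  fin_cases i
  · simp only [HF, Pi.smul_apply, Pi.sub_apply, smul_eq_mul]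
    norm_num
    rw [hdiv n]; ring
  · simp only [HF, Pi.smul_apply, Pi.sub_apply, smul_eq_mul]
    norm_num
    rw [hdiv (n + 1)]; ring
  · simp only [HF, Pi.smul_apply, Pi.sub_apply, smul_eq_mul]
    norm_num
    rw [hdiv (n + 2)]; ring
  · simp only [HF, Pi.smul_apply, Pi.sub_apply, smul_eq_mul]
    norm_num
    rw [hdiv (n + 3)]; ring
end

section
/- Cassini's identity for hyperbolic k-Fibonacci quaternions: for n ≥ 1, HF_{k,n−1}·HF_{k,n+1} − HF_{k,n}² = (−1)^n·(0, 2k, 2(k²+1), k³+2k), where the product of hyperbolic quaternions uses the multiplication rules i² = j² = k² = 1, ij = k = −ji, jk = i = −kj, ki = j = −ik. -/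
lemma kFibT (k : ℝ) (a b : ℕ) : ∀ n : ℕ,
    kFib k (n + a) * kFib k (n + b + 2) - kFib k (n + a + 1) * kFib k (n + b + 1)
      = (-1 : ℝ) ^ n * (kFib k a * kFib k (b + 2) - kFib k (a + 1) * kFib k (b + 1))
  | 0 => by simp
  | (n + 1) => by
    have ih := kFibT k a b n
    have e1 : n + 1 + a = n + a + 1 := by omega
    have e2 : n + 1 + b + 2 = (n + b + 1) + 2 := by omega
    have e3 : n + a + 1 + 1 = (n + a) + 2 := by omega
    have e4 : n + 1 + b + 1 = n + b + 2 := by omega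
    rw [e1, e2, e3, e4, kFib_rec k (n + b + 1), kFib_rec k (n + a), pow_succ]
    linear_combination (-1 : ℝ) * ih

lemma kFib0 (k : ℝ) : kFib k 0 = 0 := rfl
lemma kFib1 (k : ℝ) : kFib k 1 = 1 := rfl
lemma kFib2 (k : ℝ) : kFib k 2 = k := by
  rw [show (2:ℕ) = 0 + 2 from rfl, kFib_rec, kFib0, kFib1]; ring
lemma kFib3 (k : ℝ) : kFib k 3 = k ^ 2 + 1 := by
  rw [show (3:ℕ) = 1 + 2 from rfl, kFib_rec, kFib2, kFib1]; ring
lemma kFib4 (k : ℝ) : kFib k 4 = k ^ 3 + 2 * k := by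
  rw [show (4:ℕ) = 2 + 2 from rfl, kFib_rec, kFib3, kFib2]; ring
lemma kFib5 (k : ℝ) : kFib k 5 = k ^ 4 + 3 * k ^ 2 + 1 := by
  rw [show (5:ℕ) = 3 + 2 from rfl, kFib_rec, kFib4, kFib3]; ring

theorem HF_cassini (k : ℝ) (hk : 0 < k) (n : ℕ) (hn : 1 ≤ n) :
    hmul (HF k (n - 1)) (HF k (n + 1)) - hmul (HF k n) (HF k n) =
      ((-1 : ℝ) ^ n) • ![(0 : ℝ), 2 * k, 2 * (k ^ 2 + 1), k ^ 3 + 2 * k] := by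
  obtain ⟨m, rfl⟩ : ∃ m, n = m + 1 := ⟨n - 1, (Nat.succ_pred_eq_of_pos hn).symm⟩
  have hm : m + 1 - 1 = m := rfl
  have T : ∀ a b : ℕ,
      kFib k (m + a) * kFib k (m + b + 2) - kFib k (m + a + 1) * kFib k (m + b + 1)
        = (-1 : ℝ) ^ m * (kFib k a * kFib k (b + 2) - kFib k (a + 1) * kFib k (b + 1)) :=
    fun a b => kFibT k a b m
  have h00 := T 0 0; have h11 := T 1 1; have h22 := T 2 2; have h33 := T 3 3
  have h01 := T 0 1; have h10 := T 1 0; have h23 := T 2 3; have h32 := T 3 2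
  have h02 := T 0 2; have h20 := T 2 0; have h13 := T 1 3; have h31 := T 3 1
  have h03 := T 0 3; have h30 := T 3 0; have h12 := T 1 2; have h21 := T 2 1
  simp only [kFib0, kFib1, kFib2, kFib3, kFib4, kFib5, Nat.add_zero, Nat.add_assoc,
    Nat.reduceAdd] at h00 h11 h22 h33 h01 h10 h23 h32 h02 h20 h13 h31 h03 h30 h12 h21
  funext c
  fin_cases c <;> simp [hm, HF, hmul, Nat.add_assoc]
  · linear_combination h00 + h11 + h22 + h33
  · linear_combination h01 + h10 + h23 - h32
  · linear_combination h02 + h20 - h13 + h31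
  · linear_combination h03 + h30 + h12 - h21
end
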